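/- For integers d ≥ 3 and N ≥ 0, the sum ∑_{n=0}^{N-1} k_d(n) * (Λ_N - Λ_n), where Λ_n = n(n+d-2) and k_d(n) = (1/(d-2)) * C(n+d-3, d-3) * (2n+d-2), equals ((2N+d-1)(2N+d-3)/(d+1)) * C(N+d-2, d-1). -/

import Mathlib

/-- Multiplicity of spherical harmonics of degree `n` on `S^{d-1}`. -/
noncomputable def sphMult (d n : ℕ) : ℚ :=
  (1 / ((d : ℚ) - 2)) * (Nat.choose (n + d - 3) (d - 3) : ℚ) * (2 * n + (d : ℚ) - 2)

/-- Eigenvalue `Λ_n = n(n+d-2)` of the Laplacian on `S^{d-1}`. -/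
noncomputable def sphEig (d n : ℕ) : ℚ := (n : ℚ) * ((n : ℚ) + (d : ℚ) - 2)

private lemma Brec (e N : ℕ) :
    ((N : ℚ) + 1) * (Nat.choose (N + 1 + e) e : ℚ)
      = ((N : ℚ) + e + 1) * (Nat.choose (N + e) e : ℚ) := by
  have h1 := Nat.add_one_mul_choose_eq (N + e) e
  have h2 := Nat.choose_succ_right_eq (N + e + 1) e
  rw [show N + e + 1 - e = N + 1 by omega] at h2
  have h3 : (N + e + 1) * Nat.choose (N + e) e = Nat.choose (N + e + 1) e * (N + 1) := by
    rw [h1, h2]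
  have h3q : ((N : ℚ) + e + 1) * (Nat.choose (N + e) e : ℚ)
      = (Nat.choose (N + e + 1) e : ℚ) * ((N : ℚ) + 1) := by
    exact_mod_cast congrArg (Nat.cast : ℕ → ℚ) h3
  rw [show N + 1 + e = N + e + 1 by omega]
  linarith [h3q]

private lemma L1 (e N : ℕ) :
    ((e : ℚ) + 2) * ∑ n ∈ Finset.range N, (2 * (n : ℚ) + e + 1) * (Nat.choose (n + e) e : ℚ)
      = (N : ℚ) * (2 * N + e) * (Nat.choose (N + e) e : ℚ) := by
  induction N with
  | zero => simp
  | succ N ih =>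
    rw [Finset.sum_range_succ, mul_add, ih]
    have hrec := Brec e N
    push_cast
    linear_combination (-(2 * (N : ℚ) + e + 2)) * hrec

private lemma L2 (e N : ℕ) :
    ((e : ℚ) + 4) * ∑ n ∈ Finset.range N,
        (2 * (n : ℚ) + e + 1) * ((n : ℚ) * ((n : ℚ) + e + 1)) * (Nat.choose (n + e) e : ℚ)
      = (N : ℚ) * ((N : ℚ) - 1) * ((N : ℚ) + e + 1) * (2 * N + e) * (Nat.choose (N + e) e : ℚ) := by
  induction N with
  | zero => simp
  | succ N ih =>
    rw [Finset.sum_range_succ, mul_add, ih]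
    have hrec := Brec e N
    push_cast
    linear_combination (-((N : ℚ) * ((N : ℚ) + e + 2) * (2 * (N : ℚ) + e + 2))) * hrec

private lemma Ffin (e N : ℕ) :
    ((e : ℚ) + 2) * ((e : ℚ) + 1) * (Nat.choose (N + e + 1) (e + 2) : ℚ)
      = (N : ℚ) * ((N : ℚ) + e + 1) * (Nat.choose (N + e) e : ℚ) := by
  have h1 := Nat.add_one_mul_choose_eq (N + e) e
  have h2 := Nat.choose_succ_right_eq (N + e + 1) (e + 1)
  rw [show N + e + 1 - (e + 1) = N by omega] at h2
  have h1q : ((N : ℚ) + e + 1) * (Nat.choose (N + e) e : ℚ)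
      = (Nat.choose (N + e + 1) (e + 1) : ℚ) * ((e : ℚ) + 1) := by
    exact_mod_cast congrArg (Nat.cast : ℕ → ℚ) h1
  have h2q : (Nat.choose (N + e + 1) (e + 2) : ℚ) * ((e : ℚ) + 2)
      = (Nat.choose (N + e + 1) (e + 1) : ℚ) * (N : ℚ) := by
    exact_mod_cast congrArg (Nat.cast : ℕ → ℚ) h2
  linear_combination ((e : ℚ) + 1) * h2q - (N : ℚ) * h1q

theorem sum_mult_eig_diff (d N : ℕ) (hd : 3 ≤ d) :
    ∑ n ∈ Finset.range N, sphMult d n * (sphEig d N - sphEig d n)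
      = (2 * (N : ℚ) + d - 1) * (2 * (N : ℚ) + d - 3) / ((d : ℚ) + 1)
        * (Nat.choose (N + d - 2) (d - 1) : ℚ) := by
  obtain ⟨e, rfl⟩ : ∃ e, d = e + 3 := ⟨d - 3, by omega⟩
  have he1 : ((e : ℚ) + 1) ≠ 0 := by positivity
  have he4 : ((e : ℚ) + 4) ≠ 0 := by positivity
  have he2 : ((e : ℚ) + 2) ≠ 0 := by positivity
  have hm : ∀ n : ℕ, sphMult (e + 3) n
      = 1 / ((e : ℚ) + 1) * (Nat.choose (n + e) e : ℚ) * (2 * (n : ℚ) + e + 1) := by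
    intro n
    simp only [sphMult, show n + (e + 3) - 3 = n + e by omega, show e + 3 - 3 = e by omega]
    push_cast
    ring
  have hg : ∀ n : ℕ, sphEig (e + 3) n = (n : ℚ) * ((n : ℚ) + e + 1) := by
    intro n
    simp only [sphEig]
    push_cast
    ring
  have hsum : ∑ n ∈ Finset.range N, sphMult (e + 3) n * (sphEig (e + 3) N - sphEig (e + 3) n)
      = (1 / ((e : ℚ) + 1)) *
        ((N : ℚ) * ((N : ℚ) + e + 1) *
          (∑ n ∈ Finset.range N, (2 * (n : ℚ) + e + 1) * (Nat.choose (n + e) e : ℚ))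
        - ∑ n ∈ Finset.range N,
            (2 * (n : ℚ) + e + 1) * ((n : ℚ) * ((n : ℚ) + e + 1)) * (Nat.choose (n + e) e : ℚ)) := by
    rw [Finset.mul_sum, ← Finset.sum_sub_distrib, Finset.mul_sum]
    refine Finset.sum_congr rfl fun n _ => ?_
    rw [hm n, hg N, hg n]
    field_simp
  have h1 := L1 e N
  have h2 := L2 e N
  have hf := Ffin e N
  have hS1 : ∑ n ∈ Finset.range N, (2 * (n : ℚ) + e + 1) * (Nat.choose (n + e) e : ℚ)
      = (N : ℚ) * (2 * N + e) * (Nat.choose (N + e) e : ℚ) / ((e : ℚ) + 2) := by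
    rw [eq_div_iff he2]; linear_combination h1
  have hS2 : ∑ n ∈ Finset.range N,
        (2 * (n : ℚ) + e + 1) * ((n : ℚ) * ((n : ℚ) + e + 1)) * (Nat.choose (n + e) e : ℚ)
      = (N : ℚ) * ((N : ℚ) - 1) * ((N : ℚ) + e + 1) * (2 * N + e) * (Nat.choose (N + e) e : ℚ)
        / ((e : ℚ) + 4) := by
    rw [eq_div_iff he4]; linear_combination h2
  have hC : (Nat.choose (N + e + 1) (e + 2) : ℚ)
      = (N : ℚ) * ((N : ℚ) + e + 1) * (Nat.choose (N + e) e : ℚ)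
        / (((e : ℚ) + 2) * ((e : ℚ) + 1)) := by
    rw [eq_div_iff (mul_ne_zero he2 he1)]; linear_combination hf
  rw [hsum, show N + (e + 3) - 2 = N + e + 1 by omega, show e + 3 - 1 = e + 2 by omega,
    hS1, hS2, hC]
  push_cast
  field_simp
  ring
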